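/- Let k ≥ 3 be an integer and a ∈ ℂ. If the function f(z) = z + a·z^k belongs to the parabolic starlike class S_p, then f belongs to the uniformly starlike class UST. -/

import Mathlib

open Complex Metric

/-- The open unit disc in `ℂ`. -/
def unitDisc : Set ℂ := Metric.ball 0 1

/-- `f ∈ 𝒜ₙ`: `f` is analytic on the unit disc with power series
`f(z) = z + ∑_{k=n+1}^∞ a_k z^k`. -/
def MemA (n : ℕ) (f : ℂ → ℂ) : Prop :=
  DifferentiableOn ℂ f unitDisc ∧
    ∃ a : ℕ → ℂ, ∀ z ∈ unitDisc, f z = z + ∑' k : ℕ, a k * z ^ (n + 1 + k)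

/-- `f ∈ Ωₙ`: `f ∈ 𝒜ₙ` and `|z f'(z) - f(z)| < 1/2` on the unit disc. -/
def MemOmega (n : ℕ) (f : ℂ → ℂ) : Prop :=
  MemA n f ∧ ∀ z ∈ unitDisc, ‖z * deriv f z - f z‖ < 1 / 2

lemma key_re (u v : ℂ) (hu : normSq u ≤ 1/2) (hv : normSq v ≤ 1/2) :
    0 ≤ ((1 + u) / (1 + v)).re := by
  rw [div_re, ← add_div]
  apply div_nonneg _ (normSq_nonneg _)
  simp only [add_re, add_im, one_re, one_im]
  have h1 := normSq_apply u
  have h2 := normSq_apply v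
  nlinarith [sq_nonneg (u.re + v.re + 1), sq_nonneg (u.im + v.im), sq_nonneg (u.im - v.im),
    sq_nonneg (u.re - v.re)]

lemma exists_dir (k : ℕ) (hk : 3 ≤ k) (a : ℂ) (r : ℝ) (hr0 : 0 ≤ r) :
    ∃ z : ℂ, ‖z‖ = r ∧ a * z ^ (k-1) = -((‖a‖ * r^(k-1) : ℝ)) := by
  have hk1 : (k : ℝ) - 1 ≠ 0 := by
    have : (3:ℝ) ≤ k := by exact_mod_cast hk
    linarith
  refine ⟨(r:ℂ) * Complex.exp ((((Real.pi - Complex.arg a)/((k:ℝ)-1) : ℝ) : ℂ) * Complex.I),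
    ?_, ?_⟩
  · rw [norm_mul, Complex.norm_exp_ofReal_mul_I, Complex.norm_real, Real.norm_eq_abs, _root_.abs_of_nonneg hr0,
      mul_one]
  · rw [mul_pow, ← Complex.exp_nat_mul]
    have hcast : ((k-1 : ℕ) : ℂ) * ((((Real.pi - Complex.arg a)/((k:ℝ)-1) : ℝ) : ℂ) * Complex.I)
        = ((Real.pi : ℂ) - (Complex.arg a : ℂ)) * Complex.I := by
      have h1 : ((k-1:ℕ):ℂ) = (k:ℂ) - 1 := by
        have : (1:ℕ) ≤ k := by omega
        push_cast [Nat.cast_sub this]; ring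
      rw [h1]
      have hk1' : (k:ℂ) - 1 ≠ 0 := by
        intro h
        have := congrArg Complex.re h
        simp at this
        exact hk1 (by simpa using this)
      push_cast
      field_simp
    rw [hcast, sub_mul, Complex.exp_sub, Complex.exp_pi_mul_I]
    have ha2 : a * Complex.exp (-((Complex.arg a : ℂ) * Complex.I)) = (‖a‖ : ℂ) := by
      conv_lhs => rw [← Complex.norm_mul_exp_arg_mul_I a]
      rw [mul_assoc, ← Complex.exp_add]
      simp
    rw [div_eq_mul_inv, ← Complex.exp_neg]
    push_cast
    calc a * ((r:ℂ)^(k-1) * (-1 * Complex.exp (-((Complex.arg a :ℂ) * Complex.I))))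
        = -((r:ℂ)^(k-1) * (a * Complex.exp (-((Complex.arg a:ℂ) * Complex.I)))) := by ring
      _ = _ := by rw [ha2]; ring

theorem stmt_13 (k : ℕ) (hk : 3 ≤ k) (a : ℂ)
    (hSp : ∀ z ∈ unitDisc, z ≠ 0 →
      (z + a * z ^ k ≠ 0 ∧
        (z * deriv (fun w => w + a * w ^ k) z / (z + a * z ^ k)).re >
          ‖z * deriv (fun w => w + a * w ^ k) z / (z + a * z ^ k) - 1‖)) :
    ∀ z ∈ unitDisc, ∀ ξ ∈ unitDisc,
      (z + a * z ^ k) ≠ (ξ + a * ξ ^ k) →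
        0 ≤ ((z - ξ) * deriv (fun w => w + a * w ^ k) z /
              ((z + a * z ^ k) - (ξ + a * ξ ^ k))).re := by
  have hk3 : (3:ℝ) ≤ (k:ℝ) := by exact_mod_cast hk
  have hderiv : ∀ z : ℂ, deriv (fun w => w + a * w ^ k) z = 1 + a * ((k:ℂ) * z ^ (k-1)) := by
    intro z
    exact ((hasDerivAt_id' z).add ((hasDerivAt_pow k z).const_mul a)).deriv
  have hfac : ∀ w : ℂ, w + a * w ^ k = w * (1 + a * w ^ (k-1)) := by
    intro w
    have hk' : k = (k-1) + 1 := by omega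
    conv_lhs => rw [hk']
    ring
  have hmem : ∀ z : ℂ, ‖z‖ < 1 → z ∈ unitDisc := by
    intro z hz
    simpa [unitDisc, Metric.mem_ball, Complex.dist_eq] using hz
  -- Step 1 : |a| ≤ 1
  have ha1 : ‖a‖ ≤ 1 := by
    by_contra h
    push_neg at h
    have ha0 : 0 < ‖a‖ := lt_trans one_pos h
    set s : ℝ := (‖a‖) ^ (-(1:ℝ)/((k:ℝ)-1)) with hs
    have hs0 : 0 < s := Real.rpow_pos_of_pos ha0 _
    have hs1 : s < 1 := by
      apply Real.rpow_lt_one_of_one_lt_of_neg h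
      rw [div_neg_iff]
      right
      constructor <;> linarith
    have hsk : ‖a‖ * s ^ (k-1) = 1 := by
      rw [hs, ← Real.rpow_natCast ((‖a‖) ^ (-(1:ℝ)/((k:ℝ)-1))) (k-1),
        ← Real.rpow_mul ha0.le]
      have hcc : (-(1:ℝ)/((k:ℝ)-1)) * ((k-1:ℕ):ℝ) = -1 := by
        have h2 : ((k-1:ℕ):ℝ) = (k:ℝ)-1 := by
          push_cast [Nat.cast_sub (by omega : 1 ≤ k)]; ring
        have hk1 : (k:ℝ) - 1 ≠ 0 := by linarith
        rw [h2, div_mul_cancel₀ _ hk1]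
      rw [hcc, Real.rpow_neg_one, mul_inv_cancel₀ ha0.ne']
    obtain ⟨z, hzabs, hzeq⟩ := exists_dir k hk a s hs0.le
    have hzd : z ∈ unitDisc := hmem z (by rw [hzabs]; exact hs1)
    have hz0 : z ≠ 0 := by
      intro h0
      rw [h0] at hzabs
      simp at hzabs
      linarith
    obtain ⟨hne, -⟩ := hSp z hzd hz0
    apply hne
    rw [hfac z, hzeq, hsk]
    simp
  -- Step 2 : the coefficient bound
  have hbound : ∀ r : ℝ, 0 < r → r < 1 → (2*(k:ℝ)-1) * (‖a‖ * r^(k-1)) < 1 := by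
    intro r hr0 hr1
    set t : ℝ := ‖a‖ * r^(k-1) with ht
    have hrp : (0:ℝ) ≤ r^(k-1) := pow_nonneg hr0.le _
    have ht0 : 0 ≤ t := mul_nonneg (norm_nonneg a) hrp
    have ht1 : t < 1 := by
      have h1 : t ≤ r^(k-1) := by
        calc t ≤ 1 * r^(k-1) := by rw [ht]; exact mul_le_mul_of_nonneg_right ha1 hrp
          _ = r^(k-1) := one_mul _
      have h2 : r^(k-1) < 1 := pow_lt_one₀ hr0.le hr1 (by omega)
      linarith
    obtain ⟨z, hzabs, hzeq⟩ := exists_dir k hk a r hr0.le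
    have hzd : z ∈ unitDisc := hmem z (by rw [hzabs]; exact hr1)
    have hz0 : z ≠ 0 := by
      intro h0
      rw [h0] at hzabs
      simp at hzabs
      linarith
    obtain ⟨-, hre⟩ := hSp z hzd hz0
    rw [hderiv z] at hre
    have hD : z + a * z^k = z * ((1 - t : ℝ):ℂ) := by
      rw [hfac z, hzeq, ht]; push_cast; ring
    have hN : z * (1 + a * ((k:ℂ) * z^(k-1))) = z * ((1 - k*t : ℝ):ℂ) := by
      have h3 : a * ((k:ℂ)*z^(k-1)) = (k:ℂ) * (a * z^(k-1)) := by ring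
      rw [h3, hzeq, ht]; push_cast; ring
    rw [hN, hD, mul_div_mul_left _ _ hz0, ← Complex.ofReal_div] at hre
    rw [show ((((1 - (k:ℝ)*t)/(1-t) : ℝ)) : ℂ) - 1 = (((1 - (k:ℝ)*t)/(1-t) - 1 : ℝ) : ℂ) by
      push_cast; ring, Complex.norm_real, Real.norm_eq_abs, Complex.ofReal_re] at hre
    have hre2 : (1 - (k:ℝ)*t)/(1-t) > |(1 - (k:ℝ)*t)/(1-t) - 1| := hre
    have h12 : (1:ℝ)/2 < (1 - (k:ℝ)*t)/(1-t) := by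
      have := neg_le_abs ((1 - (k:ℝ)*t)/(1-t) - 1)
      linarith
    rw [lt_div_iff₀ (by linarith : (0:ℝ) < 1 - t)] at h12
    nlinarith
  -- Main argument
  intro z hz ξ hξ hne
  have hzξ : z ≠ ξ := by
    intro h0; exact hne (by rw [h0])
  set S : ℂ := ∑ i ∈ Finset.range k, z^i * ξ^(k-1-i) with hS
  have hfd : (z + a*z^k) - (ξ + a*ξ^k) = (z - ξ) * (1 + a * S) := by
    rw [hS]
    linear_combination a * (geom_sum₂_mul z ξ k).symm
  rw [hderiv z, hfd, mul_div_mul_left _ _ (sub_ne_zero.mpr hzξ)]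
  -- set up radii
  have hza : ‖z‖ < 1 := by
    simpa [unitDisc, Metric.mem_ball, Complex.dist_eq] using hz
  have hξa : ‖ξ‖ < 1 := by
    simpa [unitDisc, Metric.mem_ball, Complex.dist_eq] using hξ
  set ρ : ℝ := max (‖z‖) (‖ξ‖) with hρ
  have hρ0 : 0 ≤ ρ := le_trans (norm_nonneg z) (le_max_left _ _)
  have hρ1 : ρ < 1 := max_lt hza hξa
  set r : ℝ := (1 + ρ)/2 with hr
  have hr0 : 0 < r := by rw [hr]; linarith
  have hr1 : r < 1 := by rw [hr]; linarith
  have hρr : ρ ≤ r := by rw [hr]; linarith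
  have hb := hbound r hr0 hr1
  have hrp : (0:ℝ) ≤ r^(k-1) := pow_nonneg hr0.le _
  -- bound: |a| * r^(k-1) < 1/(2k-1), so k * |a| * r^(k-1) ≤ k/(2k-1) and its square ≤ 1/2
  have hc2 : ((k:ℝ) * (‖a‖ * r^(k-1)))^2 ≤ 1/2 := by
    have h1 : (‖a‖ * r^(k-1)) < 1/(2*(k:ℝ)-1) := by
      rw [lt_div_iff₀ (by linarith : (0:ℝ) < 2*(k:ℝ)-1)]
      linarith
    have h2 : (0:ℝ) ≤ ‖a‖ * r^(k-1) := mul_nonneg (norm_nonneg a) hrp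
    have h3 : (k:ℝ) * (‖a‖ * r^(k-1)) ≤ (k:ℝ) * (1/(2*(k:ℝ)-1)) :=
      mul_le_mul_of_nonneg_left h1.le (by linarith)
    have h6 : ((k:ℝ)*(1/(2*(k:ℝ)-1)))^2 ≤ 1/2 := by
      rw [mul_one_div, div_pow, div_le_iff₀ (by nlinarith : (0:ℝ) < (2*(k:ℝ)-1)^2)]
      nlinarith
    have h7 : (0:ℝ) ≤ (k:ℝ) * (‖a‖ * r^(k-1)) := by positivity
    calc ((k:ℝ) * (‖a‖ * r^(k-1)))^2 ≤ ((k:ℝ)*(1/(2*(k:ℝ)-1)))^2 :=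
          pow_le_pow_left₀ h7 h3 2
      _ ≤ 1/2 := h6
  -- bound on u = a * (k * z^(k-1))
  have hul : ‖a * ((k:ℂ) * z ^ (k-1))‖ ≤ (k:ℝ) * (‖a‖ * r^(k-1)) := by
    rw [norm_mul, norm_mul, norm_pow]
    have h1 : ‖z‖ ≤ r := le_trans (le_max_left _ _) hρr
    have h2 : (‖z‖)^(k-1) ≤ r^(k-1) :=
      pow_le_pow_left₀ (norm_nonneg z) h1 _
    have h3 : ‖(k:ℂ)‖ = (k:ℝ) := by
      rw [Complex.norm_natCast]
    rw [h3]
    calc ‖a‖ * ((k:ℝ) * (‖z‖)^(k-1))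
        ≤ ‖a‖ * ((k:ℝ) * r^(k-1)) := by
          apply mul_le_mul_of_nonneg_left _ (norm_nonneg a)
          apply mul_le_mul_of_nonneg_left h2 (by positivity)
      _ = (k:ℝ) * (‖a‖ * r^(k-1)) := by ring
  -- bound on v = a * S
  have hvl : ‖a * S‖ ≤ (k:ℝ) * (‖a‖ * r^(k-1)) := by
    rw [norm_mul]
    have hSb : ‖S‖ ≤ (k:ℝ) * r^(k-1) := by
      rw [hS]
      calc ‖∑ i ∈ Finset.range k, z^i * ξ^(k-1-i)‖
          ≤ ∑ i ∈ Finset.range k, ‖z^i * ξ^(k-1-i)‖ := norm_sum_le _ _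
        _ ≤ ∑ i ∈ Finset.range k, r^(k-1) := by
            apply Finset.sum_le_sum
            intro i hi
            rw [Finset.mem_range] at hi
            rw [norm_mul, norm_pow, norm_pow]
            have h1 : (‖z‖)^i ≤ r^i :=
              pow_le_pow_left₀ (norm_nonneg z) (le_trans (le_max_left _ _) hρr) _
            have h2 : (‖ξ‖)^(k-1-i) ≤ r^(k-1-i) :=
              pow_le_pow_left₀ (norm_nonneg ξ) (le_trans (le_max_right _ _) hρr) _
            calc (‖z‖)^i * (‖ξ‖)^(k-1-i)
                ≤ r^i * r^(k-1-i) := by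
                  apply mul_le_mul h1 h2 (by positivity) (by positivity)
              _ = r^(k-1) := by
                  rw [← pow_add]
                  congr 1
                  omega
        _ = (k:ℝ) * r^(k-1) := by
            rw [Finset.sum_const, Finset.card_range, nsmul_eq_mul]
    calc ‖a‖ * ‖S‖ ≤ ‖a‖ * ((k:ℝ) * r^(k-1)) :=
          mul_le_mul_of_nonneg_left hSb (norm_nonneg a)
      _ = (k:ℝ) * (‖a‖ * r^(k-1)) := by ring
  apply key_re
  · rw [← Complex.sq_norm]
    calc (‖a * ((k:ℂ) * z ^ (k-1))‖)^2
        ≤ ((k:ℝ) * (‖a‖ * r^(k-1)))^2 :=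
          pow_le_pow_left₀ (norm_nonneg _) hul _
      _ ≤ 1/2 := hc2
  · rw [← Complex.sq_norm]
    calc (‖a * S‖)^2 ≤ ((k:ℝ) * (‖a‖ * r^(k-1)))^2 :=
          pow_le_pow_left₀ (norm_nonneg _) hvl _
      _ ≤ 1/2 := hc2
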